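/- The multiplicative subgroup G of the positive rationals generated by the set {f(x, y) : x, y positive integers}, where f(x, y) = (x+1)(y+1)/(x+y+1), is equal to the whole group of positive rationals. -/

import Mathlib

/-- The multiplicative group of positive rational numbers. -/
abbrev Qpos := {q : ℚ // 0 < q}

/-- `f x y = (x+1)(y+1)/(x+y+1)`. -/
def f (x y : ℕ) : ℚ := ((x + 1 : ℚ) * (y + 1)) / (x + y + 1)

/-- `G` is the subgroup of the positive rationals generated by
`{f x y : x, y positive integers}`. -/
def G : Subgroup Qpos :=
  Subgroup.closure {g : Qpos | ∃ x y : ℕ, 0 < x ∧ 0 < y ∧ (g : ℚ) = f x y}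

lemma f_pos (x y : ℕ) : 0 < f x y := by
  unfold f; positivity

lemma f_mem (x y : ℕ) (hx : 0 < x) (hy : 0 < y) :
    (⟨f x y, f_pos x y⟩ : Qpos) ∈ G :=
  Subgroup.subset_closure ⟨x, y, hx, hy, rfl⟩

lemma mem_of_eq {g h : Qpos} (hg : g ∈ G) (e : (h : ℚ) = (g : ℚ)) : h ∈ G := by
  have : h = g := Subtype.ext e
  rwa [this]

lemma two_mem : ∀ (g : Qpos), (g : ℚ) = 2 → g ∈ G := by
  intro g hg
  apply mem_of_eq (mul_mem (f_mem 1 1 one_pos one_pos) (f_mem 1 2 one_pos two_pos))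
  show (g : ℚ) = f 1 1 * f 1 2
  rw [hg]; norm_num [f]

lemma nat_mem : ∀ (n : ℕ) (g : Qpos), (g : ℚ) = (n : ℚ) + 1 → g ∈ G := by
  intro n
  induction n with
  | zero =>
    intro g hg
    have : g = 1 := Subtype.ext (by rw [hg]; norm_num)
    rw [this]; exact one_mem G
  | succ n ih =>
    intro g hg
    rcases Nat.eq_zero_or_pos n with h0 | hpos
    · subst h0
      exact two_mem g (by rw [hg]; norm_num)
    · -- g = (prev) * 2 * (f 1 n)⁻¹
      have hprev : (⟨(n : ℚ) + 1, by positivity⟩ : Qpos) ∈ G := ih _ rfl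
      have h2 : (⟨(2 : ℚ), by norm_num⟩ : Qpos) ∈ G := two_mem _ rfl
      have hf := f_mem 1 n one_pos hpos
      apply mem_of_eq (mul_mem (mul_mem hprev h2) (inv_mem hf))
      show (g : ℚ) = ((n : ℚ) + 1) * 2 * (f 1 n)⁻¹
      rw [hg]
      have hn1 : ((n : ℚ) + 1) ≠ 0 := by positivity
      have hn2 : ((n : ℚ) + 2) ≠ 0 := by positivity
      simp only [f]
      field_simp
      push_cast
      ring

lemma nat_mem' (n : ℕ) (hn : 0 < n) (g : Qpos) (hg : (g : ℚ) = (n : ℚ)) : g ∈ G := by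
  obtain ⟨m, rfl⟩ := Nat.exists_eq_add_of_lt hn
  exact nat_mem m g (by rw [hg]; push_cast; ring)

/-- `G` is the whole group of positive rationals. -/
theorem stmt_12 : G = ⊤ := by
  rw [eq_top_iff]
  intro q _
  have hq : (0 : ℚ) < q := q.2
  have hnum : 0 < (q : ℚ).num := Rat.num_pos.mpr hq
  have hden : 0 < (q : ℚ).den := (q : ℚ).pos
  have ha : (⟨((q : ℚ).num.toNat : ℚ), by exact_mod_cast (by omega : 0 < (q : ℚ).num.toNat)⟩ : Qpos) ∈ G :=
    nat_mem' _ (by omega) _ rfl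
  have hb : (⟨((q : ℚ).den : ℚ), by exact_mod_cast hden⟩ : Qpos) ∈ G :=
    nat_mem' _ hden _ rfl
  apply mem_of_eq (mul_mem ha (inv_mem hb))
  show (q : ℚ) = ((q : ℚ).num.toNat : ℚ) * ((q : ℚ).den : ℚ)⁻¹
  have hcast : (((q : ℚ).num.toNat : ℕ) : ℚ) = ((q : ℚ).num : ℚ) := by
    exact_mod_cast congrArg (Int.cast : ℤ → ℚ) (Int.toNat_of_nonneg hnum.le)
  rw [hcast, ← div_eq_mul_inv, Rat.num_div_den]
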